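/- Let n ≥ 2 and let h be an n×n real symmetric positive semidefinite matrix satisfying h i j = 0 whenever i ≠ j and both i, j lie among the first n−1 indices, and h i i > 0 for every i among the first n−1 indices. If the quadratic form ξ ↦ ξᵀ h ξ vanishes at some nonzero vector ξ, then h ξ = 0 and every vector at which the quadratic form vanishes is a scalar multiple of ξ; consequently the rank of h is exactly n − 1. -/

import Mathlib

/-- At a singular point of a positive semidefinite "arrowhead" matrix, the zero
eigenvalue is simple: any null vector of the quadratic form lies in the kernel,
the null directions form a line, and the rank is exactly `n − 1`. -/
theorem stmt_8 (n : ℕ) (hn : 2 ≤ n) (h : Matrix (Fin n) (Fin n) ℝ)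
    (hdiag : ∀ i j : Fin n, i ≠ j → (i : ℕ) < n - 1 → (j : ℕ) < n - 1 → h i j = 0)
    (hpos : ∀ i : Fin n, (i : ℕ) < n - 1 → 0 < h i i)
    (hpsd : h.PosSemidef)
    (ξ : Fin n → ℝ) (hξ : ξ ≠ 0)
    (hQ : dotProduct ξ (h.mulVec ξ) = 0) :
    h.mulVec ξ = 0 ∧
    (∀ ζ : Fin n → ℝ, dotProduct ζ (h.mulVec ζ) = 0 → ∃ c : ℝ, ζ = c • ξ) ∧
    h.rank = n - 1 := by
  have hker : ∀ v : Fin n → ℝ, dotProduct v (h.mulVec v) = 0 → h.mulVec v = 0 := by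
    intro v hv
    have := (hpsd.dotProduct_mulVec_zero_iff v).mp (by simpa using hv)
    exact this
  set e : Fin n := ⟨n - 1, by omega⟩ with he
  -- coordinate equations for kernel vectors
  have key : ∀ v : Fin n → ℝ, h.mulVec v = 0 → ∀ i : Fin n, (i : ℕ) < n - 1 →
      h i i * v i + h i e * v e = 0 := by
    intro v hv i hi
    have hcf : h.mulVec v i = 0 := by rw [hv]; rfl
    have hie : i ≠ e := by
      intro hie; rw [hie] at hi; simp [he] at hi
    have hsum : (∑ j, h i j * v j) = h i i * v i + h i e * v e := by
      refine Finset.sum_eq_add_of_mem i e (Finset.mem_univ _) (Finset.mem_univ _) hie ?_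
      intro j _ hj
      obtain ⟨hji, hje⟩ := hj
      have hjlt : (j : ℕ) < n - 1 := by
        have := j.isLt
        have : (j : ℕ) ≠ n - 1 := fun hc => hje (Fin.ext hc)
        omega
      rw [hdiag i j (Ne.symm hji) hi hjlt, zero_mul]
    rw [Matrix.mulVec, dotProduct] at hcf
    rw [hsum] at hcf
    exact hcf
  -- a kernel vector vanishing at `e` is zero
  have hvanish : ∀ v : Fin n → ℝ, h.mulVec v = 0 → v e = 0 → v = 0 := by
    intro v hv hve
    funext i
    by_cases hi : (i : ℕ) < n - 1
    · have := key v hv i hi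
      have hii := hpos i hi
      rw [hve, mul_zero, add_zero] at this
      have := mul_eq_zero.mp this
      rcases this with h1 | h2
      · exact absurd h1 (ne_of_gt hii)
      · exact h2
    · have : i = e := Fin.ext (by have := i.isLt; simp [he]; omega)
      rw [this, hve]; rfl
  have hξ0 : h.mulVec ξ = 0 := hker ξ hQ
  have hξe : ξ e ≠ 0 := fun hc => hξ (hvanish ξ hξ0 hc)
  have huniq : ∀ ζ : Fin n → ℝ, dotProduct ζ (h.mulVec ζ) = 0 → ∃ c : ℝ, ζ = c • ξ := by
    intro ζ hζQ
    have hζ0 : h.mulVec ζ = 0 := hker ζ hζQ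
    refine ⟨ζ e / ξ e, ?_⟩
    funext i
    by_cases hi : (i : ℕ) < n - 1
    · have h1 := key ζ hζ0 i hi
      have h2 := key ξ hξ0 i hi
      have hii := (hpos i hi).ne'
      have hmul : h i i * (ζ i * ξ e) = h i i * (ζ e * ξ i) := by
        linear_combination ξ e * h1 - ζ e * h2
      have hgoal := mul_left_cancel₀ hii hmul
      simp only [Pi.smul_apply, smul_eq_mul]
      field_simp
      linear_combination hgoal
    · have : i = e := Fin.ext (by have := i.isLt; simp [he]; omega)
      rw [this]
      simp only [Pi.smul_apply, smul_eq_mul]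
      field_simp
  refine ⟨hξ0, huniq, ?_⟩
  -- the kernel of `mulVecLin h` is the line spanned by `ξ`
  have hkereq : LinearMap.ker h.mulVecLin = Submodule.span ℝ {ξ} := by
    apply le_antisymm
    · intro x hx
      have hx0 : h.mulVec x = 0 := hx
      have : dotProduct x (h.mulVec x) = 0 := by rw [hx0, dotProduct_zero]
      obtain ⟨c, hc⟩ := huniq x this
      rw [hc]
      exact Submodule.smul_mem _ _ (Submodule.mem_span_singleton_self ξ)
    · rw [Submodule.span_singleton_le_iff_mem]
      exact hξ0
  have hkdim : Module.finrank ℝ (LinearMap.ker h.mulVecLin) = 1 := by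
    rw [hkereq]
    exact finrank_span_singleton hξ
  have hsum := LinearMap.finrank_range_add_finrank_ker h.mulVecLin
  rw [hkdim, Module.finrank_fintype_fun_eq_card, Fintype.card_fin] at hsum
  have : h.rank = Module.finrank ℝ (LinearMap.range h.mulVecLin) := rfl
  omega
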